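/- arXiv:1409.7543 — 3 statements merged into one kernel-verified Lean document; each statement's English description precedes it below -/
import Mathlib

section
/- Let 𝔨 be a finite-dimensional semisimple Lie algebra over ℝ with Killing form B, let 𝔥 ⊆ 𝔨 be a Lie subalgebra on which B is nondegenerate, let 𝔪 be the Killing-orthogonal complement of 𝔥, and let pr_𝔥 : 𝔨 → 𝔥 be the projection onto 𝔥 along 𝔪. For Z ∈ 𝔥, the bilinear form on 𝔪 × 𝔪 given by (X,Y) ↦ B(Z, pr_𝔥(⁅X,Y⁆)) is nondegenerate if and only if ker(ad Z) ∩ 𝔪 = {0}, i.e. if and only if ⁅Z,X⁆ = 0 with X ∈ 𝔪 implies X = 0. -/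
/-- Lie-algebraic core of Lerman's fatness criterion.
With `𝔨` semisimple over `ℝ`, `𝔥` a Lie subalgebra on which the Killing form `B` is
nondegenerate, `𝔪` the Killing-orthogonal complement of `𝔥` and `pr` the projection of
`𝔨` onto `𝔥` along `𝔪`, for `Z ∈ 𝔥` the bilinear form `(X,Y) ↦ B(Z, pr ⁅X,Y⁆)` on
`𝔪 × 𝔪` is nondegenerate (for every nonzero `X ∈ 𝔪` some `Y ∈ 𝔪` pairs nontrivially,
and symmetrically) if and only if `ker (ad Z) ∩ 𝔪 = {0}`. -/
theorem stmt2
    (K : Type*) [LieRing K] [LieAlgebra ℝ K] [Module.Finite ℝ K]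
    (hK : (killingForm ℝ K).Nondegenerate)
    (H : LieSubalgebra ℝ K)
    (hH : ((killingForm ℝ K).restrict H.toSubmodule).Nondegenerate)
    (M : Submodule ℝ K)
    (hM : ∀ X : K, X ∈ M ↔ ∀ Y ∈ H, killingForm ℝ K X Y = 0)
    (pr : K →ₗ[ℝ] K)
    (hpr_mem : ∀ X : K, pr X ∈ H)
    (hprH : ∀ X ∈ H, pr X = X)
    (hprM : ∀ X ∈ M, pr X = 0)
    (Z : K) (hZ : Z ∈ H) :
    ((∀ X ∈ M, X ≠ 0 → ∃ Y ∈ M, killingForm ℝ K Z (pr ⁅X, Y⁆) ≠ 0) ∧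
     (∀ Y ∈ M, Y ≠ 0 → ∃ X ∈ M, killingForm ℝ K Z (pr ⁅X, Y⁆) ≠ 0)) ↔
    (∀ X ∈ M, ⁅Z, X⁆ = 0 → X = 0) := by
  set B := killingForm ℝ K with hB
  have symm : ∀ a b : K, B a b = B b a := LieModule.traceForm_comm ℝ K K
  have refl : B.IsRefl := fun a b h => by rw [symm]; exact h
  have inv : ∀ x y z : K, B ⁅x, y⁆ z = B x ⁅y, z⁆ :=
    LieModule.traceForm_apply_lie_apply ℝ K K
  have inv' : ∀ x y z : K, B ⁅x, y⁆ z = - B y ⁅x, z⁆ :=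
    LieModule.traceForm_apply_lie_apply' ℝ K K
  -- M is the orthogonal complement of H
  have hMeq : M = B.orthogonal H.toSubmodule := by
    ext x
    rw [hM, LinearMap.BilinForm.mem_orthogonal_iff]
    constructor
    · intro h n hn; rw [symm]; exact h n hn
    · intro h y hy; rw [symm]; exact h y hy
  have compl : IsCompl H.toSubmodule M := by
    rw [hMeq]
    exact (LinearMap.BilinForm.restrict_nondegenerate_iff_isCompl_orthogonal refl).mp hH
  -- decomposition: W - pr W ∈ M
  have decomp : ∀ W : K, W - pr W ∈ M := by
    intro W
    obtain ⟨h, m, hh, hm, heq⟩ := Submodule.codisjoint_iff_exists_add_eq.mp compl.codisjoint W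
    have hp : pr W = h := by
      rw [← heq, map_add, hprH h hh, hprM m hm, add_zero]
    rw [hp, ← heq]; simpa using hm
  -- B Z m = 0 for m ∈ M
  have hZM : ∀ m ∈ M, B Z m = 0 := fun m hm => by rw [symm]; exact (hM m).mp hm Z hZ
  -- key reduction: B Z (pr W) = B Z W
  have key : ∀ X Y : K, B Z (pr ⁅X, Y⁆) = B ⁅Z, X⁆ Y := by
    intro X Y
    have h1 : B Z ⁅X, Y⁆ - B Z (pr ⁅X, Y⁆) = 0 := by
      rw [← map_sub]; exact hZM _ (decomp ⁅X, Y⁆)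
    have h2 : B Z (pr ⁅X, Y⁆) = B Z ⁅X, Y⁆ := by linarith [h1]
    rw [h2, inv]
  -- ad Z preserves M
  have adM : ∀ X ∈ M, ⁅Z, X⁆ ∈ M := by
    intro X hX
    rw [hM]
    intro y hy
    rw [inv' Z X y]
    have : B X ⁅Z, y⁆ = 0 := (hM X).mp hX _ (H.lie_mem hZ hy)
    rw [this, neg_zero]
  -- nondegeneracy of B restricted to M (via decomposition)
  have nondegM : ∀ m ∈ M, m ≠ 0 → ∃ y ∈ M, B m y ≠ 0 := by
    intro m hm hm0
    obtain ⟨W, hW⟩ : ∃ W, B m W ≠ 0 := by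
      by_contra h
      push_neg at h
      exact hm0 (hK.1 m h)
    refine ⟨W - pr W, decomp W, ?_⟩
    have : B m (pr W) = 0 := (hM m).mp hm _ (hpr_mem W)
    rw [map_sub, this, sub_zero]
    exact hW
  constructor
  · rintro ⟨h1, _⟩ X hX hZX
    by_contra hX0
    obtain ⟨Y, _, hne⟩ := h1 X hX hX0
    apply hne
    rw [key, hZX]
    simp
  · intro hker
    constructor
    · intro X hX hX0
      have hZX : ⁅Z, X⁆ ≠ 0 := fun h => hX0 (hker X hX h)
      obtain ⟨Y, hY, hne⟩ := nondegM ⁅Z, X⁆ (adM X hX) hZX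
      exact ⟨Y, hY, by rw [key]; exact hne⟩
    · intro Y hY hY0
      have hZY : ⁅Z, Y⁆ ≠ 0 := fun h => hY0 (hker Y hY h)
      obtain ⟨X, hXm, hne⟩ := nondegM ⁅Z, Y⁆ (adM Y hY) hZY
      refine ⟨X, hXm, ?_⟩
      rw [key, inv' Z X Y]
      rw [symm] at hne
      simpa using hne
end

section
/- Let n ≥ 1 and m ≥ 0. In the real Lie algebra 𝔰𝔬(2n+2m+1) of skew-symmetric (2n+2m+1)×(2n+2m+1) real matrices with the commutator bracket, let J_{2n} ∈ M_{2n}(ℝ) be the block-diagonal matrix consisting of n copies of the 2×2 block [[0,1],[−1,0]], and let T be the block-diagonal matrix diag(J_{2n}, 0_{2m+1}) ∈ 𝔰𝔬(2n+2m+1). For M ∈ M_{2n×(2m+1)}(ℝ) let X(M) ∈ 𝔰𝔬(2n+2m+1) be the block matrix with zero diagonal blocks, upper-right block M and lower-left block −Mᵀ. Then for every M: ⁅T, X(M)⁆ = X(J_{2n}·M), hence ⁅T, ⁅T, X(M)⁆⁆ = −X(M); in particular ⁅T, X(M)⁆ = 0 implies M = 0. -/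
open Matrix

/-- The `2k × 2k` block-diagonal matrix consisting of `k` copies of the
`2 × 2` block `[[0, 1], [-1, 0]]`. -/
def Jmat (k : ℕ) : Matrix (Fin (2 * k)) (Fin (2 * k)) ℝ :=
  Matrix.of fun i j =>
    if (i : ℕ) + 1 = (j : ℕ) ∧ (i : ℕ) % 2 = 0 then 1
    else if (j : ℕ) + 1 = (i : ℕ) ∧ (j : ℕ) % 2 = 0 then -1
    else 0

lemma Jmat_transpose (k : ℕ) : (Jmat k)ᵀ = -(Jmat k) := by
  ext i j
  simp only [Jmat, transpose_apply, Matrix.neg_apply, Matrix.of_apply]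
  split_ifs <;> first | (exfalso; omega) | norm_num

lemma Jmat_sq (k : ℕ) : Jmat k * Jmat k = -1 := by
  ext i j
  rw [Matrix.mul_apply]
  rcases Nat.even_or_odd (i : ℕ) with he | ho
  · have hi2 : (i : ℕ) % 2 = 0 := Nat.even_iff.mp he
    have hlt : (i : ℕ) + 1 < 2 * k := by have := i.isLt; omega
    rw [Finset.sum_eq_single (⟨(i : ℕ) + 1, hlt⟩ : Fin (2 * k))]
    · simp only [Jmat, Matrix.of_apply, Matrix.neg_apply, Matrix.one_apply]
      simp only [Fin.ext_iff, eq_self_iff_true, true_and]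
      split_ifs <;> first | (exfalso; omega) | norm_num
    · intro b _ hb
      have hb' : ¬((i : ℕ) + 1 = (b : ℕ)) := by
        intro h; exact hb (by simp [Fin.ext_iff, ← h])
      simp only [Jmat, Matrix.of_apply]
      split_ifs <;> first | (exfalso; omega) | norm_num
    · simp
  · have hi2 : (i : ℕ) % 2 = 1 := Nat.odd_iff.mp ho
    have hlt : (i : ℕ) - 1 < 2 * k := by have := i.isLt; omega
    rw [Finset.sum_eq_single (⟨(i : ℕ) - 1, hlt⟩ : Fin (2 * k))]
    · simp only [Jmat, Matrix.of_apply, Matrix.neg_apply, Matrix.one_apply]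
      simp only [Fin.ext_iff, eq_self_iff_true, true_and]
      split_ifs <;> first | (exfalso; omega) | norm_num
    · intro b _ hb
      have hb' : ¬((b : ℕ) + 1 = (i : ℕ)) := by
        intro h; exact hb (by simp [Fin.ext_iff]; omega)
      simp only [Jmat, Matrix.of_apply]
      split_ifs <;> first | (exfalso; omega) | norm_num
    · simp

/-- In `𝔰𝔬(2n+2m+1)` with the commutator bracket, let
`T = diag(J_{2n}, 0_{2m+1})` and, for `M ∈ M_{2n×(2m+1)}(ℝ)`, let
`X(M) = [[0, M], [-Mᵀ, 0]]`.  Then `⁅T, X(M)⁆ = X(J_{2n}·M)`, hence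
`⁅T, ⁅T, X(M)⁆⁆ = -X(M)`, and `⁅T, X(M)⁆ = 0` implies `M = 0`. -/
theorem stmt11 (n m : ℕ) (hn : 1 ≤ n) (hm : 0 ≤ m)
    (T : Matrix (Fin (2 * n) ⊕ Fin (2 * m + 1)) (Fin (2 * n) ⊕ Fin (2 * m + 1)) ℝ)
    (hT : T = Matrix.fromBlocks (Jmat n) 0 0 0)
    (X : Matrix (Fin (2 * n)) (Fin (2 * m + 1)) ℝ →
      Matrix (Fin (2 * n) ⊕ Fin (2 * m + 1)) (Fin (2 * n) ⊕ Fin (2 * m + 1)) ℝ)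
    (hX : ∀ M, X M = Matrix.fromBlocks 0 M (-Mᵀ) 0) :
    ∀ M : Matrix (Fin (2 * n)) (Fin (2 * m + 1)) ℝ,
      ⁅T, X M⁆ = X (Jmat n * M) ∧
      ⁅T, ⁅T, X M⁆⁆ = -(X M) ∧
      (⁅T, X M⁆ = 0 → M = 0) := by
  intro M
  have hJt : ∀ N : Matrix (Fin (2 * n)) (Fin (2 * m + 1)) ℝ,
      -(Jmat n * N)ᵀ = Nᵀ * Jmat n := by
    intro N
    rw [Matrix.transpose_mul, Jmat_transpose, Matrix.mul_neg, neg_neg]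
  have key : ∀ N : Matrix (Fin (2 * n)) (Fin (2 * m + 1)) ℝ,
      ⁅T, X N⁆ = X (Jmat n * N) := by
    intro N
    rw [Ring.lie_def, hT, hX, hX, Matrix.fromBlocks_multiply,
      Matrix.fromBlocks_multiply, hJt]
    ext i j
    rcases i with i | i <;> rcases j with j | j <;>
      simp [Matrix.sub_apply]
  refine ⟨key M, ?_, ?_⟩
  · rw [key M, key (Jmat n * M), ← Matrix.mul_assoc, Jmat_sq, hX, hX]
    ext i j
    rcases i with i | i <;> rcases j with j | j <;> simp
  · intro h
    rw [key M, hX] at h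
    have h2 : Jmat n * M = 0 := by
      have := congrArg (fun A => A.toBlocks₁₂) h
      exact (by simpa [Matrix.toBlocks_fromBlocks₁₂] using this :
        Jmat n * M = (0 : Matrix (Fin (2 * n) ⊕ Fin (2 * m + 1)) (Fin (2 * n) ⊕ Fin (2 * m + 1)) ℝ).toBlocks₁₂).trans rfl
    have h3 : Jmat n * (Jmat n * M) = 0 := by rw [h2, Matrix.mul_zero]
    rw [← Matrix.mul_assoc, Jmat_sq] at h3
    simpa using h3
end

section
/- Let n, m ≥ 1. In the real Lie algebra 𝔰𝔭(n+m) of quaternionic skew-adjoint matrices, i.e. matrices A ∈ M_{(n+m)×(n+m)}(ℍ) with A^* = −A where A^* is the conjugate transpose, equipped with the commutator bracket, let T = diag(0_n, i·I_m) (block-diagonal, with i the quaternion unit). For M ∈ M_{n×m}(ℍ) let X(M) ∈ 𝔰𝔭(n+m) be the block matrix with zero diagonal blocks, upper-right block M and lower-left block −M^*. Then for every M: ⁅T, X(M)⁆ = X(−M·i), hence ⁅T, ⁅T, X(M)⁆⁆ = −X(M); in particular ⁅T, X(M)⁆ = 0 implies M = 0. -/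
open Matrix Quaternion

def qi : Quaternion ℝ := ⟨0, 1, 0, 0⟩

lemma star_qi : star qi = -qi := by
  have h1 : qi.re = 0 := rfl
  have h2 : qi.imI = 1 := rfl
  have h3 : qi.imJ = 0 := rfl
  have h4 : qi.imK = 0 := rfl
  ext <;> simp [h1, h2, h3, h4]

lemma qi_mul_qi : qi * qi = -1 := by
  have h1 : qi.re = 0 := rfl
  have h2 : qi.imI = 1 := rfl
  have h3 : qi.imJ = 0 := rfl
  have h4 : qi.imK = 0 := rfl
  ext <;> simp [h1, h2, h3, h4]

/-- In the compact symplectic Lie algebra `𝔰𝔭(n+m)` of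
quaternionic skew-adjoint matrices with the commutator bracket, let
`T = diag(0_n, i·I_m)` and, for `M ∈ M_{n×m}(ℍ)`, let
`X(M) = [[0, M], [-M^*, 0]]`.  Then `⁅T, X(M)⁆ = X(-M·i)`, hence
`⁅T, ⁅T, X(M)⁆⁆ = -X(M)`, and `⁅T, X(M)⁆ = 0` implies `M = 0`. -/
theorem stmt12 (n m : ℕ) (hn : 1 ≤ n) (hm : 1 ≤ m)
    (T : Matrix (Fin n ⊕ Fin m) (Fin n ⊕ Fin m) (Quaternion ℝ))
    (hT : T = Matrix.fromBlocks 0 0 0 (Matrix.diagonal fun _ => qi))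
    (X : Matrix (Fin n) (Fin m) (Quaternion ℝ) →
      Matrix (Fin n ⊕ Fin m) (Fin n ⊕ Fin m) (Quaternion ℝ))
    (hX : ∀ M, X M = Matrix.fromBlocks 0 M (-Mᴴ) 0) :
    ∀ M : Matrix (Fin n) (Fin m) (Quaternion ℝ),
      ⁅T, X M⁆ = X (-(M * Matrix.diagonal fun _ => qi)) ∧
      ⁅T, ⁅T, X M⁆⁆ = -(X M) ∧
      (⁅T, X M⁆ = 0 → M = 0) := by
  set D : Matrix (Fin m) (Fin m) (Quaternion ℝ) := Matrix.diagonal fun _ => qi with hD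
  have hDH : Dᴴ = -D := by
    rw [hD, Matrix.diagonal_conjTranspose]
    simp [star_qi, Matrix.diagonal_neg]
  have hDD : D * D = -1 := by
    rw [hD, Matrix.diagonal_mul_diagonal]
    simp [qi_mul_qi, ← Matrix.diagonal_neg, ← Matrix.diagonal_one]
  have key : ∀ M : Matrix (Fin n) (Fin m) (Quaternion ℝ),
      ⁅T, X M⁆ = X (-(M * D)) := by
    intro M
    rw [Ring.lie_def, hT, hX, hX, Matrix.fromBlocks_multiply,
      Matrix.fromBlocks_multiply]
    have : (-(M * D))ᴴ = D * Mᴴ := by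
      rw [Matrix.conjTranspose_neg, Matrix.conjTranspose_mul, hDH]
      simp [Matrix.neg_mul]
    rw [this]
    ext (i | i) (j | j) <;>
      simp [Matrix.fromBlocks, Matrix.sub_apply, Matrix.neg_mul, Matrix.mul_neg]
  intro M
  have h1 := key M
  have h2 : ⁅T, ⁅T, X M⁆⁆ = -(X M) := by
    rw [h1, key]
    simp only [Matrix.neg_mul, neg_neg, Matrix.mul_assoc, hDD, Matrix.mul_neg,
      Matrix.mul_one]
    simp [hX, Matrix.fromBlocks_neg]
  refine ⟨h1, h2, fun h0 => ?_⟩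
  rw [h1, hX] at h0
  have h12 : M * D = 0 := by
    refine Matrix.ext fun i j => ?_
    have := congrFun (congrFun h0 (Sum.inl i)) (Sum.inr j)
    simpa [Matrix.fromBlocks, neg_eq_zero] using this
  have : M * D * D = 0 := by rw [h12, Matrix.zero_mul]
  rw [Matrix.mul_assoc, hDD, Matrix.mul_neg, Matrix.mul_one, neg_eq_zero] at this
  exact this
end
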